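/- Let X be a compact metrizable space, let p ∈ [1, ∞) with p ≠ 2, and let a ∈ M_n(C(X)) be regarded as a continuous function a : X → M_n(ℂ). Then the L^p operator matrix norm of a equals sup_{x ∈ X} ‖a(x)‖_p, where ‖·‖_p denotes the operator norm on M_n(ℂ) acting on ℓ^p_n. Concretely: if μ is a σ-finite Borel measure on X with full support and C(X) is represented on L^p(X,μ) by multiplication operators, then the norm of the induced operator of a on ℓ^p_n ⊗_p L^p(X,μ) equals sup_{x ∈ X} ‖a(x)‖_p. -/

import Mathlib

open scoped ENNReal
open MeasureTheory

/-- A `n × n` complex matrix, viewed as a bounded operator on `ℓ^p_n`. -/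
noncomputable def matrixLp (p : ℝ≥0∞) [Fact (1 ≤ p)] {n : ℕ}
    (M : Matrix (Fin n) (Fin n) ℂ) :
    PiLp p (fun _ : Fin n => ℂ) →L[ℂ] PiLp p (fun _ : Fin n => ℂ) :=
  LinearMap.toContinuousLinearMap
    ((WithLp.linearEquiv p ℂ (∀ _ : Fin n, ℂ)).symm.toLinearMap ∘ₗ
      M.mulVecLin ∘ₗ (WithLp.linearEquiv p ℂ (∀ _ : Fin n, ℂ)).toLinearMap)

lemma matrixLp_apply (p : ℝ≥0∞) [Fact (1 ≤ p)] {n : ℕ}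
    (M : Matrix (Fin n) (Fin n) ℂ) (v : PiLp p (fun _ : Fin n => ℂ)) (j : Fin n) :
    matrixLp p M v j = ∑ k, M j k * v k := by
  simp [matrixLp, Matrix.mulVec, dotProduct, WithLp.linearEquiv,
    Matrix.mulVecLin]

/-- `matrixLp` as a linear map in the matrix argument. -/
noncomputable def matrixLpₗ (p : ℝ≥0∞) [Fact (1 ≤ p)] (n : ℕ) :
    Matrix (Fin n) (Fin n) ℂ →ₗ[ℂ]
      (PiLp p (fun _ : Fin n => ℂ) →L[ℂ] PiLp p (fun _ : Fin n => ℂ)) where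
  toFun M := matrixLp p M
  map_add' M N := by
    ext v j
    simp [matrixLp_apply, Matrix.add_apply, add_mul, Finset.sum_add_distrib]
  map_smul' c M := by
    ext v j
    simp [matrixLp_apply, Matrix.smul_apply, Finset.mul_sum, mul_assoc]

lemma continuous_matrixLp (p : ℝ≥0∞) [Fact (1 ≤ p)] (n : ℕ) :
    Continuous fun M : Matrix (Fin n) (Fin n) ℂ => matrixLp p M :=
  (matrixLpₗ p n).continuous_of_finiteDimensional

lemma pilp_nnnorm_rpow {ι : Type*} [Fintype ι] {E : ι → Type*}
    [∀ i, NormedAddCommGroup (E i)]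
    (p : ℝ≥0∞) [Fact (1 ≤ p)] (hp : p ≠ ⊤) (f : PiLp p E) :
    (‖f‖₊ : ℝ≥0∞) ^ p.toReal = ∑ i, (‖f i‖₊ : ℝ≥0∞) ^ p.toReal := by
  have hp0 : p ≠ 0 := (one_pos.trans_le (Fact.out : 1 ≤ p)).ne'
  have hq0 : 0 < p.toReal := ENNReal.toReal_pos hp0 hp
  have h := PiLp.norm_eq_sum hq0 f
  have hsum : 0 ≤ ∑ i, ‖f i‖ ^ p.toReal :=
    Finset.sum_nonneg fun i _ => Real.rpow_nonneg (norm_nonneg _) _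
  have hr : ‖f‖ ^ p.toReal = ∑ i, ‖f i‖ ^ p.toReal := by
    rw [h, ← Real.rpow_mul hsum, one_div, inv_mul_cancel₀ hq0.ne', Real.rpow_one]
  calc (‖f‖₊ : ℝ≥0∞) ^ p.toReal = ENNReal.ofReal (‖f‖ ^ p.toReal) := by
        rw [← enorm_eq_nnnorm, ← ofReal_norm, ← ENNReal.ofReal_rpow_of_nonneg (norm_nonneg _) hq0.le]
    _ = ∑ i, ENNReal.ofReal (‖f i‖ ^ p.toReal) := by
        rw [hr, ENNReal.ofReal_sum_of_nonneg (fun i _ => Real.rpow_nonneg (norm_nonneg _) _)]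
    _ = ∑ i, (‖f i‖₊ : ℝ≥0∞) ^ p.toReal := by
        refine Finset.sum_congr rfl fun i _ => ?_
        rw [← enorm_eq_nnnorm, ← ofReal_norm, ← ENNReal.ofReal_rpow_of_nonneg (norm_nonneg _) hq0.le]

lemma lp_nnnorm_rpow {X : Type*} [MeasurableSpace X] {μ : Measure X}
    (p : ℝ≥0∞) [Fact (1 ≤ p)] (hp : p ≠ ⊤) (f : Lp ℂ p μ) :
    (‖f‖₊ : ℝ≥0∞) ^ p.toReal = ∫⁻ x, (‖f x‖₊ : ℝ≥0∞) ^ p.toReal ∂μ := by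
  have hp0 : p ≠ 0 := (one_pos.trans_le (Fact.out : 1 ≤ p)).ne'
  have hq0 : 0 < p.toReal := ENNReal.toReal_pos hp0 hp
  have h1 : (‖f‖₊ : ℝ≥0∞) = eLpNorm f p μ := by
    rw [Lp.nnnorm_def, ENNReal.coe_toNNReal (Lp.eLpNorm_ne_top f)]
  rw [h1]
  simp only [← enorm_eq_nnnorm]
  rw [eLpNorm_eq_lintegral_rpow_enorm_toReal hp0 hp, one_div, ← ENNReal.rpow_mul,
    inv_mul_cancel₀ hq0.ne', ENNReal.rpow_one]

lemma coeFn_finset_sum {X : Type*} [MeasurableSpace X] {μ : Measure X}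
    {ι : Type*} (s : Finset ι) (F : ι → (X →ₘ[μ] ℂ)) :
    ⇑(∑ i ∈ s, F i) =ᵐ[μ] fun x => ∑ i ∈ s, (F i) x := by
  induction s using Finset.cons_induction with
  | empty =>
    simp only [Finset.sum_empty]
    exact AEEqFun.coeFn_zero (β := ℂ) (μ := μ)
  | cons i s hi ih =>
    rw [Finset.sum_cons]
    filter_upwards [AEEqFun.coeFn_add (F i) (∑ j ∈ s, F j), ih] with x hx hx'
    simp [Finset.sum_cons, hx, hx']

/-- Let `X` be compact metrizable, `p ∈ [1, ∞)`, `p ≠ 2`, and let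
`a ∈ M_n(C(X)) ≅ C(X, M_n(ℂ))`.  If `μ` is a σ-finite Borel measure on `X` of full
support and `T` is the operator induced by `a` on `ℓ^p_n ⊗_p L^p(X, μ)` (matrix
multiplication in the `ℓ^p_n` coordinate, pointwise multiplication in the `L^p(X, μ)`
coordinate), then `‖T‖ = sup_{x ∈ X} ‖a(x)‖_p`, the `L^p` operator matrix norm of `a`. -/
theorem stmt_18 (p : ℝ≥0∞) [Fact (1 ≤ p)] (hp : p ≠ ⊤) (hp2 : p ≠ 2)
    {X : Type*} [TopologicalSpace X] [CompactSpace X] [TopologicalSpace.MetrizableSpace X]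
    [MeasurableSpace X] [BorelSpace X]
    (μ : Measure X) [SigmaFinite μ] [μ.IsOpenPosMeasure]
    (n : ℕ) (a : C(X, Matrix (Fin n) (Fin n) ℂ))
    (T : PiLp p (fun _ : Fin n => Lp ℂ p μ) →L[ℂ] PiLp p (fun _ : Fin n => Lp ℂ p μ))
    (hT : ∀ (ξ : PiLp p (fun _ : Fin n => Lp ℂ p μ)) (j : Fin n),
      ((T ξ j : Lp ℂ p μ) : X →ₘ[μ] ℂ) =
        ∑ k, MeasureTheory.AEEqFun.mk (fun x => a x j k)
            (((continuous_apply k).comp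
              ((continuous_apply j).comp a.continuous)).aestronglyMeasurable) *
          ((ξ k : Lp ℂ p μ) : X →ₘ[μ] ℂ)) :
    ‖T‖ = ⨆ x : X, ‖matrixLp p (a x)‖ := by
  have hp0 : p ≠ 0 := (one_pos.trans_le (Fact.out : 1 ≤ p)).ne'
  set q := p.toReal with hqdef
  have hq0 : 0 < q := ENNReal.toReal_pos hp0 hp
  -- a.e. pointwise formula for `T`
  have hTa : ∀ ξ : PiLp p (fun _ : Fin n => Lp ℂ p μ), ∀ j : Fin n,
      ⇑(T ξ j : Lp ℂ p μ) =ᵐ[μ] fun x => ∑ k, a x j k * (ξ k : Lp ℂ p μ) x := by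
    intro ξ j
    set F : Fin n → (X →ₘ[μ] ℂ) := fun k =>
      MeasureTheory.AEEqFun.mk (fun x => a x j k)
            (((continuous_apply k).comp
              ((continuous_apply j).comp a.continuous)).aestronglyMeasurable) *
          ((ξ k : Lp ℂ p μ) : X →ₘ[μ] ℂ) with hF
    have h1 := coeFn_finset_sum (Finset.univ) F
    have h2 : ∀ k : Fin n, ⇑(F k) =ᵐ[μ] fun x => a x j k * (ξ k : Lp ℂ p μ) x := by
      intro k
      rw [hF]
      filter_upwards [AEEqFun.coeFn_mul
        (MeasureTheory.AEEqFun.mk (fun x => a x j k)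
            (((continuous_apply k).comp
              ((continuous_apply j).comp a.continuous)).aestronglyMeasurable))
        ((ξ k : Lp ℂ p μ) : X →ₘ[μ] ℂ),
        AEEqFun.coeFn_mk (fun x => a x j k)
          (((continuous_apply k).comp
              ((continuous_apply j).comp a.continuous)).aestronglyMeasurable)] with x hx hx'
      simp only [hx, Pi.mul_apply, hx']
    have h2' : ∀ᵐ x ∂μ, ∀ k : Fin n, (F k) x = a x j k * (ξ k : Lp ℂ p μ) x :=
      MeasureTheory.ae_all_iff.2 h2
    show ⇑(((T ξ j : Lp ℂ p μ) : X →ₘ[μ] ℂ)) =ᵐ[μ] _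
    rw [hT ξ j, ← hF]
    filter_upwards [h1, h2'] with x hx hx'
    rw [hx]
    exact Finset.sum_congr rfl fun k _ => hx' k
  -- norm formula on the PiLp-of-Lp space
  have hnorm : ∀ ξ : PiLp p (fun _ : Fin n => Lp ℂ p μ),
      (‖ξ‖₊ : ℝ≥0∞) ^ q = ∫⁻ x, ∑ j, (‖(ξ j : Lp ℂ p μ) x‖₊ : ℝ≥0∞) ^ q ∂μ := by
    intro ξ
    calc (‖ξ‖₊ : ℝ≥0∞) ^ q = ∑ j, (‖ξ j‖₊ : ℝ≥0∞) ^ q := pilp_nnnorm_rpow p hp ξ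
      _ = ∑ j, ∫⁻ x, (‖(ξ j : Lp ℂ p μ) x‖₊ : ℝ≥0∞) ^ q ∂μ :=
          Finset.sum_congr rfl fun j _ => lp_nnnorm_rpow p hp (ξ j)
      _ = ∫⁻ x, ∑ j, (‖(ξ j : Lp ℂ p μ) x‖₊ : ℝ≥0∞) ^ q ∂μ :=
          (lintegral_finset_sum' Finset.univ fun j _ =>
            ((Lp.aestronglyMeasurable (ξ j)).enorm.pow_const q)).symm
  by_cases hXne : Nonempty X
  case neg =>
    rw [not_nonempty_iff] at hXne
    have h1 : (⨆ x : X, ‖matrixLp p (a x)‖) = 0 := Real.iSup_of_isEmpty _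
    haveI : Subsingleton (X →ₘ[μ] ℂ) :=
      ⟨fun f g => AEEqFun.ext (MeasureTheory.ae_of_all _ fun x => isEmptyElim x)⟩
    haveI : Subsingleton (Lp ℂ p μ) := ⟨fun f g => Subtype.ext (Subsingleton.elim _ _)⟩
    haveI : Subsingleton (PiLp p fun _ : Fin n => Lp ℂ p μ) :=
      (WithLp.equiv p (∀ _ : Fin n, Lp ℂ p μ)).subsingleton
    rw [h1, ContinuousLinearMap.opNorm_subsingleton]
  case pos =>
    have hcont : Continuous fun x => ‖matrixLp p (a x)‖ :=
      continuous_norm.comp ((continuous_matrixLp p n).comp a.continuous)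
    have hbdd : BddAbove (Set.range fun x : X => ‖matrixLp p (a x)‖) :=
      (isCompact_range hcont).bddAbove
    have hS0 : 0 ≤ ⨆ x : X, ‖matrixLp p (a x)‖ :=
      le_trans (norm_nonneg _) (le_ciSup hbdd (Classical.arbitrary X))
    set S := ⨆ x : X, ‖matrixLp p (a x)‖ with hSdef
    refine le_antisymm ?_ ?_
    · -- upper bound
      refine ContinuousLinearMap.opNorm_le_bound T hS0 fun ξ => ?_
      have key : (‖T ξ‖₊ : ℝ≥0∞) ^ q ≤ (ENNReal.ofReal S) ^ q * (‖ξ‖₊ : ℝ≥0∞) ^ q := by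
        rw [hnorm (T ξ), hnorm ξ, ← lintegral_const_mul' _ _ (ENNReal.rpow_ne_top_of_nonneg hq0.le ENNReal.ofReal_ne_top)]
        have hae : ∀ᵐ x ∂μ, ∀ j : Fin n,
            (T ξ j : Lp ℂ p μ) x = ∑ k, a x j k * (ξ k : Lp ℂ p μ) x :=
          MeasureTheory.ae_all_iff.2 (hTa ξ)
        refine lintegral_mono_ae (hae.mono fun x hx => ?_)
        set v : PiLp p (fun _ : Fin n => ℂ) :=
          (WithLp.equiv p (∀ _ : Fin n, ℂ)).symm (fun k => (ξ k : Lp ℂ p μ) x) with hv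
        have hvk : ∀ k, v k = (ξ k : Lp ℂ p μ) x := fun k => rfl
        calc ∑ j, (‖(T ξ j : Lp ℂ p μ) x‖₊ : ℝ≥0∞) ^ q
            = ∑ j, (‖(matrixLp p (a x)) v j‖₊ : ℝ≥0∞) ^ q := by
              refine Finset.sum_congr rfl fun j _ => ?_
              rw [hx j, matrixLp_apply]
              simp only [hvk]
          _ = (‖(matrixLp p (a x)) v‖₊ : ℝ≥0∞) ^ q := (pilp_nnnorm_rpow p hp _).symm
          _ ≤ (ENNReal.ofReal S * (‖v‖₊ : ℝ≥0∞)) ^ q := by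
              refine ENNReal.rpow_le_rpow ?_ hq0.le
              calc (‖(matrixLp p (a x)) v‖₊ : ℝ≥0∞)
                  = ENNReal.ofReal ‖(matrixLp p (a x)) v‖ :=
                    (ofReal_norm _).symm
                _ ≤ ENNReal.ofReal (S * ‖v‖) :=
                    ENNReal.ofReal_le_ofReal
                      (le_trans ((matrixLp p (a x)).le_opNorm v)
                        (mul_le_mul_of_nonneg_right (le_ciSup hbdd x) (norm_nonneg v)))
                _ = ENNReal.ofReal S * (‖v‖₊ : ℝ≥0∞) := by
                    rw [ENNReal.ofReal_mul hS0, ofReal_norm, enorm_eq_nnnorm]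
          _ = ENNReal.ofReal S ^ q * (‖v‖₊ : ℝ≥0∞) ^ q :=
              ENNReal.mul_rpow_of_nonneg _ _ hq0.le
          _ = ENNReal.ofReal S ^ q * ∑ k, (‖(ξ k : Lp ℂ p μ) x‖₊ : ℝ≥0∞) ^ q := by
              rw [pilp_nnnorm_rpow p hp v]
              simp only [hvk, ← hqdef]
      have key2 : (‖T ξ‖₊ : ℝ≥0∞) ≤ ENNReal.ofReal S * ‖ξ‖₊ := by
        rw [← ENNReal.rpow_le_rpow_iff hq0, ENNReal.mul_rpow_of_nonneg _ _ hq0.le]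
        exact key
      have h3 := ENNReal.toReal_mono (by finiteness) key2
      simpa [ENNReal.toReal_mul, ENNReal.toReal_ofReal hS0] using h3
    · -- lower bound
      refine ciSup_le fun x₀ => ?_
      refine ContinuousLinearMap.opNorm_le_bound _ (norm_nonneg T) fun v => ?_
      refine le_of_forall_pos_le_add fun ε hε => ?_
      set g : X → ℝ := fun x => ‖matrixLp p (a x) v‖ with hg
      have hgc : Continuous g :=
        continuous_norm.comp
          (((continuous_matrixLp p n).comp a.continuous).clm_apply continuous_const)
      have hU : IsOpen {x | g x₀ - ε < g x} := isOpen_lt continuous_const hgc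
      have hx₀U : x₀ ∈ {x | g x₀ - ε < g x} := by
        simp only [Set.mem_setOf_eq]
        linarith
      have hUpos : 0 < μ {x | g x₀ - ε < g x} := hU.measure_pos μ ⟨x₀, hx₀U⟩
      obtain ⟨E, hEm, hEU, hEpos, hEfin⟩ :=
        Measure.exists_subset_measure_lt_top hU.measurableSet hUpos
      set f1 : Lp ℂ p μ := indicatorConstLp p hEm hEfin.ne (1 : ℂ) with hf1
      set ξ : PiLp p (fun _ : Fin n => Lp ℂ p μ) :=
        (WithLp.equiv p (∀ _ : Fin n, Lp ℂ p μ)).symm (fun k => v k • f1) with hξ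
      have hξk : ∀ k, (ξ k : Lp ℂ p μ) = v k • f1 := fun k => rfl
      have hfk : ∀ k : Fin n,
          ⇑(ξ k : Lp ℂ p μ) =ᵐ[μ] fun x => v k * E.indicator (fun _ => (1 : ℂ)) x := by
        intro k
        rw [hξk]
        filter_upwards [Lp.coeFn_smul (v k) f1, indicatorConstLp_coeFn (p := p)
          (hs := hEm) (hμs := hEfin.ne) (c := (1 : ℂ))] with x h1 h2
        rw [h1]
        simp [hf1, h2]
      have hae2 : ∀ᵐ x ∂μ, ∀ k : Fin n,
          (ξ k : Lp ℂ p μ) x = v k * E.indicator (fun _ => (1 : ℂ)) x :=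
        MeasureTheory.ae_all_iff.2 hfk
      -- norm of ξ
      have hnξ : (‖ξ‖₊ : ℝ≥0∞) ^ q = μ E * (‖v‖₊ : ℝ≥0∞) ^ q := by
        rw [hnorm ξ]
        have hint : (fun x => ∑ k, (‖(ξ k : Lp ℂ p μ) x‖₊ : ℝ≥0∞) ^ q)
            =ᵐ[μ] E.indicator (fun _ => ∑ k, (‖v k‖₊ : ℝ≥0∞) ^ q) := by
          filter_upwards [hae2] with x hx
          by_cases hxE : x ∈ E
          · rw [Set.indicator_of_mem hxE]
            refine Finset.sum_congr rfl fun k _ => ?_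
            rw [hx k, Set.indicator_of_mem hxE]
            simp
          · rw [Set.indicator_of_notMem hxE]
            refine Finset.sum_eq_zero fun k _ => ?_
            rw [hx k, Set.indicator_of_notMem hxE]
            simp [ENNReal.zero_rpow_of_pos hq0]
        rw [lintegral_congr_ae hint, lintegral_indicator hEm _, setLIntegral_const,
          pilp_nnnorm_rpow p hp v, mul_comm]
      -- lower bound for ‖T ξ‖
      have hTξ : ENNReal.ofReal (g x₀ - ε) ^ q * μ E ≤ (‖T ξ‖₊ : ℝ≥0∞) ^ q := by
        rw [hnorm (T ξ)]
        have hae : ∀ᵐ x ∂μ, ∀ j : Fin n,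
            (T ξ j : Lp ℂ p μ) x = ∑ k, a x j k * (ξ k : Lp ℂ p μ) x :=
          MeasureTheory.ae_all_iff.2 (hTa ξ)
        calc ENNReal.ofReal (g x₀ - ε) ^ q * μ E
            = ∫⁻ x, E.indicator (fun _ => ENNReal.ofReal (g x₀ - ε) ^ q) x ∂μ := by
              rw [lintegral_indicator hEm _, setLIntegral_const]
          _ ≤ ∫⁻ x, ∑ j, (‖(T ξ j : Lp ℂ p μ) x‖₊ : ℝ≥0∞) ^ q ∂μ := by
              refine lintegral_mono_ae ?_
              filter_upwards [hae, hae2] with x hx hx2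
              by_cases hxE : x ∈ E
              · rw [Set.indicator_of_mem hxE]
                have hsum : ∑ j, (‖(T ξ j : Lp ℂ p μ) x‖₊ : ℝ≥0∞) ^ q
                    = (‖matrixLp p (a x) v‖₊ : ℝ≥0∞) ^ q := by
                  rw [pilp_nnnorm_rpow p hp]
                  refine Finset.sum_congr rfl fun j _ => ?_
                  rw [hx j, matrixLp_apply]
                  have hss : ∑ k, a x j k * (ξ k : Lp ℂ p μ) x = ∑ k, a x j k * v k := by
                    refine Finset.sum_congr rfl fun k _ => ?_
                    rw [hx2 k, Set.indicator_of_mem hxE]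
                    ring
                  rw [hss]
                rw [hsum, ← enorm_eq_nnnorm, ← ofReal_norm]
                refine ENNReal.rpow_le_rpow (ENNReal.ofReal_le_ofReal ?_) hq0.le
                exact (hEU hxE).le
              · rw [Set.indicator_of_notMem hxE]
                exact zero_le
      have hTop : (‖T ξ‖₊ : ℝ≥0∞) ^ q ≤ ((‖T‖₊ : ℝ≥0∞) * ‖ξ‖₊) ^ q :=
        ENNReal.rpow_le_rpow (by exact_mod_cast T.le_opNNNorm ξ) hq0.le
      have hmain : ENNReal.ofReal (g x₀ - ε) ^ q * μ E
          ≤ ((‖T‖₊ : ℝ≥0∞) * ‖v‖₊) ^ q * μ E := by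
        calc ENNReal.ofReal (g x₀ - ε) ^ q * μ E ≤ (‖T ξ‖₊ : ℝ≥0∞) ^ q := hTξ
          _ ≤ ((‖T‖₊ : ℝ≥0∞) * ‖ξ‖₊) ^ q := hTop
          _ = (‖T‖₊ : ℝ≥0∞) ^ q * ((‖ξ‖₊ : ℝ≥0∞) ^ q) := by
              rw [ENNReal.mul_rpow_of_nonneg _ _ hq0.le]
          _ = ((‖T‖₊ : ℝ≥0∞) * ‖v‖₊) ^ q * μ E := by
              rw [hnξ, ENNReal.mul_rpow_of_nonneg _ _ hq0.le]
              ring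
      have hcancel : ENNReal.ofReal (g x₀ - ε) ^ q ≤ ((‖T‖₊ : ℝ≥0∞) * ‖v‖₊) ^ q :=
        (ENNReal.mul_le_mul_iff_left hEpos.ne' hEfin.ne).1 hmain
      have h5 : ENNReal.ofReal (g x₀ - ε) ≤ (‖T‖₊ : ℝ≥0∞) * ‖v‖₊ :=
        (ENNReal.rpow_le_rpow_iff hq0).1 hcancel
      have h6 : g x₀ - ε ≤ ‖T‖ * ‖v‖ := by
        rw [← enorm_eq_nnnorm, ← enorm_eq_nnnorm, ← ofReal_norm, ← ofReal_norm,
          ← ENNReal.ofReal_mul (norm_nonneg T)] at h5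
        exact (ENNReal.ofReal_le_ofReal_iff (by positivity)).1 h5
      linarith
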